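/- arXiv:0808.3077 — 14 statements merged into one kernel-verified Lean document; each statement's English description precedes it below -/
import Mathlib

section
/- If μ satisfies (μ⊆) and the domain is closed under set difference, and μ satisfies (μOR) (μ(X ∪ Y) ⊆ μ(X) ∪ μ(Y)), then μ satisfies (μPR): X ⊆ Y implies μ(Y) ∩ X ⊆ μ(X). -/
/-- (μ⊆) + closure under set difference + (μOR) imply (μPR). -/
theorem stmt_1 {α : Type*} (𝒴 : Set (Set α)) (μ : Set α → Set α)
    (hDiff : ∀ X ∈ 𝒴, ∀ Y ∈ 𝒴, X \ Y ∈ 𝒴)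
    (hSub : ∀ X ∈ 𝒴, μ X ⊆ X)
    (hOR : ∀ X ∈ 𝒴, ∀ Y ∈ 𝒴, X ∪ Y ∈ 𝒴 → μ (X ∪ Y) ⊆ μ X ∪ μ Y) :
    ∀ X ∈ 𝒴, ∀ Y ∈ 𝒴, X ⊆ Y → μ Y ∩ X ⊆ μ X := by
  intro X hX Y hY hXY a ⟨haY, haX⟩
  have hZ : Y \ X ∈ 𝒴 := hDiff Y hY X hX
  have hUeq : X ∪ (Y \ X) = Y := Set.union_diff_cancel hXY
  have hU : X ∪ (Y \ X) ∈ 𝒴 := by rw [hUeq]; exact hY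
  have := hOR X hX (Y \ X) hZ hU (by rw [hUeq]; exact haY)
  rcases this with h | h
  · exact h
  · exact absurd haX (hSub _ hZ h).2
end

section
/- If μ satisfies (μCM) (cautious monotony: μ(X) ⊆ Y ⊆ X implies μ(Y) ⊆ μ(X)), (μ⊆), and the domain is closed under finite intersections, then μ satisfies (μResM): μ(X) ⊆ A ∩ B implies μ(X ∩ A) ⊆ B. -/
/-- (μCM) + (μ⊆) + closure under finite intersections imply (μResM). -/
theorem stmt_3 {α : Type*} (𝒴 : Set (Set α)) (μ : Set α → Set α)
    (hInter : ∀ X ∈ 𝒴, ∀ Y ∈ 𝒴, X ∩ Y ∈ 𝒴)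
    (hSub : ∀ X ∈ 𝒴, μ X ⊆ X)
    (hCM : ∀ X ∈ 𝒴, ∀ Y ∈ 𝒴, μ X ⊆ Y → Y ⊆ X → μ Y ⊆ μ X) :
    ∀ X ∈ 𝒴, ∀ A B : Set α, X ∩ A ∈ 𝒴 → μ X ⊆ A ∩ B → μ (X ∩ A) ⊆ B := by
  intro X hX A B hXA hμ
  have h1 : μ X ⊆ X ∩ A := fun x hx => ⟨hSub X hX hx, (hμ hx).1⟩
  have h2 : μ (X ∩ A) ⊆ μ X := hCM X hX (X ∩ A) hXA h1 Set.inter_subset_left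
  exact fun x hx => (hμ (h2 hx)).2
end

section
/- If μ satisfies (μ⊆), (μCUM), and the domain is closed under finite intersections, then μ satisfies (μ⊆⊇): μ(X) ⊆ Y and μ(Y) ⊆ X imply μ(X) = μ(Y). -/
/-- (μ⊆) + (μCUM) + closure under finite intersections imply (μ⊆⊇). -/
theorem stmt_6 {α : Type*} (𝒴 : Set (Set α)) (μ : Set α → Set α)
    (hInter : ∀ X ∈ 𝒴, ∀ Y ∈ 𝒴, X ∩ Y ∈ 𝒴)
    (hSub : ∀ X ∈ 𝒴, μ X ⊆ X)
    (hCUM : ∀ X ∈ 𝒴, ∀ Y ∈ 𝒴, μ X ⊆ Y → Y ⊆ X → μ X = μ Y) :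
    ∀ X ∈ 𝒴, ∀ Y ∈ 𝒴, μ X ⊆ Y → μ Y ⊆ X → μ X = μ Y := by
  intro X hX Y hY hXY hYX
  have hZ := hInter X hX Y hY
  have h1 : μ X = μ (X ∩ Y) :=
    hCUM X hX (X ∩ Y) hZ (Set.subset_inter (hSub X hX) hXY) Set.inter_subset_left
  have h2 : μ Y = μ (X ∩ Y) := by
    have := hCUM Y hY (Y ∩ X) (hInter Y hY X hX)
      (Set.subset_inter (hSub Y hY) hYX) Set.inter_subset_left
    rwa [Set.inter_comm] at this
  rw [h1, h2]
end

section
/- In a smooth preferential structure (without copies) over a domain 𝒴, the minimal-elements function μ satisfies (μCum1): if μ(X₀) ⊆ U and μ(X₁) ⊆ U ∪ X₀ (for U, X₀, X₁ ∈ 𝒴), then X₀ ∩ X₁ ∩ μ(U) ⊆ μ(X₁). -/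
/-- In a smooth preferential structure, (μCum1) holds. -/
theorem stmt_8 {α : Type*} (𝒴 : Set (Set α)) (r : α → α → Prop)
    (μ : Set α → Set α)
    (hμ : ∀ X : Set α, μ X = {x ∈ X | ¬∃ y ∈ X, r y x})
    (hsmooth : ∀ X ∈ 𝒴, ∀ x ∈ X, x ∈ μ X ∨ ∃ y ∈ μ X, r y x)
    (U X0 X1 : Set α) (hU : U ∈ 𝒴) (h0 : X0 ∈ 𝒴) (h1 : X1 ∈ 𝒴)
    (hm0 : μ X0 ⊆ U) (hm1 : μ X1 ⊆ U ∪ X0) :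
    X0 ∩ X1 ∩ μ U ⊆ μ X1 := by
  rintro x ⟨⟨hx0, hx1⟩, hxU⟩
  rw [hμ] at hxU
  obtain ⟨hxUmem, hxUmin⟩ := hxU
  by_contra hxnot
  -- smoothness of X1 at x
  rcases hsmooth X1 h1 x hx1 with h | ⟨y, hyμ1, hryx⟩
  · exact hxnot h
  -- y ∈ U ∪ X0
  rcases hm1 hyμ1 with hyU | hyX0
  · exact hxUmin ⟨y, hyU, hryx⟩
  -- y ∈ X0, so x ∉ μ X0 since r y x
  have hxnot0 : x ∉ μ X0 := by
    rw [hμ]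
    rintro ⟨-, hmin⟩
    exact hmin ⟨y, hyX0, hryx⟩
  rcases hsmooth X0 h0 x hx0 with h | ⟨z, hzμ0, hrzx⟩
  · exact hxnot0 h
  · exact hxUmin ⟨z, hm0 hzμ0, hrzx⟩
end

section
/- In a smooth preferential structure (without copies), for every ordinal α the condition (μCumα) holds: if for all β ≤ α, μ(X_β) ⊆ U ∪ ⋃{X_γ : γ < β} (all sets in the smooth domain), then ⋂{X_γ : γ ≤ α} ∩ μ(U) ⊆ μ(X_α). -/
/-- In a smooth preferential structure, (μCumα) holds for every ordinal α. -/
theorem stmt_9 {M : Type*} (𝒴 : Set (Set M)) (r : M → M → Prop)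
    (μ : Set M → Set M)
    (hμ : ∀ X : Set M, μ X = {x ∈ X | ¬∃ y ∈ X, r y x})
    (hsmooth : ∀ X ∈ 𝒴, ∀ x ∈ X, x ∈ μ X ∨ ∃ y ∈ μ X, r y x)
    (a : Ordinal) (U : Set M) (X : Ordinal → Set M)
    (hU : U ∈ 𝒴) (hX : ∀ β ≤ a, X β ∈ 𝒴)
    (hpre : ∀ β ≤ a, μ (X β) ⊆ U ∪ ⋃ γ < β, X γ) :
    (⋂ γ ≤ a, X γ) ∩ μ U ⊆ μ (X a) := by
  revert hX hpre
  induction a using Ordinal.induction with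
  | h a IH =>
    intro hX hpre x hx
    obtain ⟨hxInt, hxU⟩ := hx
    simp only [Set.mem_iInter] at hxInt
    have hxXa : x ∈ X a := hxInt a le_rfl
    rcases hsmooth (X a) (hX a le_rfl) x hxXa with h | ⟨y, hy, hryx⟩
    · exact h
    · exfalso
      have hyμ := hy
      rw [hμ] at hyμ
      have hyU := hpre a le_rfl hy
      rcases hyU with hyU | hyU
      · -- y ∈ U contradicts x ∈ μ U
        rw [hμ] at hxU
        exact hxU.2 ⟨y, hyU, hryx⟩
      · simp only [Set.mem_iUnion] at hyU
        obtain ⟨γ, hγa, hyγ⟩ := hyU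
        have hxμγ : x ∈ μ (X γ) := by
          apply IH γ hγa (fun β hβ => hX β (hβ.trans hγa.le))
            (fun β hβ => hpre β (hβ.trans hγa.le))
          exact ⟨Set.mem_iInter.2 fun δ => Set.mem_iInter.2 fun hδ =>
            hxInt δ (hδ.trans hγa.le), hxU⟩
        rw [hμ] at hxμγ
        exact hxμγ.2 ⟨y, hyγ, hryx⟩
end

section
/- In a transitive smooth preferential structure (without copies), for every ordinal α the condition (μCumtα) holds: if for all β ≤ α, μ(X_β) ⊆ U ∪ ⋃{X_γ : γ < β}, then X_α ∩ μ(U) ⊆ μ(X_α). -/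
/-- In a transitive smooth preferential structure, (μCumtα) holds for every ordinal α. -/
theorem stmt_10 {M : Type*} (𝒴 : Set (Set M)) (r : M → M → Prop)
    (htrans : Transitive r)
    (μ : Set M → Set M)
    (hμ : ∀ X : Set M, μ X = {x ∈ X | ¬∃ y ∈ X, r y x})
    (hsmooth : ∀ X ∈ 𝒴, ∀ x ∈ X, x ∈ μ X ∨ ∃ y ∈ μ X, r y x)
    (a : Ordinal) (U : Set M) (X : Ordinal → Set M)
    (hU : U ∈ 𝒴) (hX : ∀ β ≤ a, X β ∈ 𝒴)
    (hpre : ∀ β ≤ a, μ (X β) ⊆ U ∪ ⋃ γ < β, X γ) :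
    X a ∩ μ U ⊆ μ (X a) := by
  intro x hx
  obtain ⟨hxXa, hxμU⟩ := hx
  have hxU : ¬∃ y ∈ U, r y x := by
    rw [hμ] at hxμU; exact hxμU.2
  -- key claim: for all γ ≤ a, no element of X γ is strictly below x
  have key : ∀ γ, γ ≤ a → ∀ y ∈ X γ, ¬ r y x := by
    intro γ
    induction γ using Ordinal.induction with
    | h γ ih =>
      intro hγ y hy hr
      -- get z ∈ μ (X γ) with r z x
      obtain ⟨z, hzμ, hzx⟩ : ∃ z ∈ μ (X γ), r z x := by
        rcases hsmooth (X γ) (hX γ hγ) y hy with hmin | ⟨z, hz, hzy⟩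
        · exact ⟨y, hmin, hr⟩
        · exact ⟨z, hz, htrans hzy hr⟩
      rcases hpre γ hγ hzμ with hzU | hzUn
      · exact hxU ⟨z, hzU, hzx⟩
      · simp only [Set.mem_iUnion] at hzUn
        obtain ⟨δ, hδγ, hzδ⟩ := hzUn
        have hzXδ : z ∈ X δ := by
          rw [hμ] at hzμ
          exact hzδ
        exact ih δ hδγ (le_of_lt (lt_of_lt_of_le hδγ hγ)) z hzXδ hzx
  rw [hμ]
  exact ⟨hxXa, fun ⟨y, hy, hr⟩ => key a le_rfl y hy hr⟩
end

section
/- In a transitive smooth preferential structure, if μ(X_β) ⊆ U ∪ ⋃{X_γ : γ < β} for all β ≤ α and x ∈ μ(U), then there is no y ≺ x with y ∈ U ∪ ⋃{X_γ : γ ≤ α}. -/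
/-- In a transitive smooth preferential structure, no element of μ(U) has a
    ≺-smaller element in U ∪ ⋃{X_γ : γ ≤ α}, under the (μCumα)-style prerequisites. -/
theorem stmt_11 {M : Type*} (𝒴 : Set (Set M)) (r : M → M → Prop)
    (htrans : Transitive r)
    (μ : Set M → Set M)
    (hμ : ∀ X : Set M, μ X = {x ∈ X | ¬∃ y ∈ X, r y x})
    (hsmooth : ∀ X ∈ 𝒴, ∀ x ∈ X, x ∈ μ X ∨ ∃ y ∈ μ X, r y x)
    (a : Ordinal) (U : Set M) (X : Ordinal → Set M)
    (hU : U ∈ 𝒴) (hX : ∀ β ≤ a, X β ∈ 𝒴)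
    (hpre : ∀ β ≤ a, μ (X β) ⊆ U ∪ ⋃ γ < β, X γ)
    (x : M) (hx : x ∈ μ U) :
    ¬∃ y, r y x ∧ y ∈ U ∪ ⋃ γ ≤ a, X γ := by
  rw [hμ] at hx
  obtain ⟨hxU, hnx⟩ := hx
  have hUcase : ∀ y, r y x → y ∉ U := fun y hr hy => hnx ⟨y, hy, hr⟩
  have key : ∀ β, β ≤ a → ∀ y, r y x → y ∉ X β := by
    intro β
    induction β using Ordinal.induction with
    | h β ih =>
      intro hβ y hr hy
      rcases hsmooth (X β) (hX β hβ) y hy with hmem | ⟨w, hw, hwr⟩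
      · rcases hpre β hβ hmem with h | h
        · exact hUcase y hr h
        · simp only [Set.mem_iUnion] at h
          obtain ⟨γ, hγ, hyγ⟩ := h
          exact ih γ hγ (hγ.le.trans hβ) y hr hyγ
      · have hrwx : r w x := htrans hwr hr
        rcases hpre β hβ hw with h | h
        · exact hUcase w hrwx h
        · simp only [Set.mem_iUnion] at h
          obtain ⟨γ, hγ, hwγ⟩ := h
          exact ih γ hγ (hγ.le.trans hβ) w hrwx hwγ
  rintro ⟨y, hr, hy | hy⟩
  · exact hUcase y hr hy
  · simp only [Set.mem_iUnion] at hy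
    obtain ⟨γ, hγ, hyγ⟩ := hy
    exact key γ hγ y hr hyγ
end

section
/- For ordinals β ≤ α, if μ satisfies (μ⊆), (μPR) and (μCumα), then μ satisfies (μCumβ). -/
/-- For ordinals b ≤ a, (μ⊆) + (μPR) + (μCum a) imply (μCum b). -/
theorem stmt_12 {α : Type*} (𝒴 : Set (Set α)) (μ : Set α → Set α)
    (a b : Ordinal) (hba : b ≤ a)
    (hSub : ∀ X ∈ 𝒴, μ X ⊆ X)
    (hPR : ∀ X ∈ 𝒴, ∀ Y ∈ 𝒴, X ⊆ Y → μ Y ∩ X ⊆ μ X)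
    (hCuma : ∀ (U : Set α) (X : Ordinal → Set α), U ∈ 𝒴 → (∀ γ ≤ a, X γ ∈ 𝒴) →
      (∀ β ≤ a, μ (X β) ⊆ U ∪ ⋃ γ < β, X γ) →
      (⋂ γ ≤ a, X γ) ∩ μ U ⊆ μ (X a)) :
    ∀ (U : Set α) (X : Ordinal → Set α), U ∈ 𝒴 → (∀ γ ≤ b, X γ ∈ 𝒴) →
      (∀ β ≤ b, μ (X β) ⊆ U ∪ ⋃ γ < β, X γ) →
      (⋂ γ ≤ b, X γ) ∩ μ U ⊆ μ (X b) := by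
  intro U X hU hX hμ
  set X' : Ordinal → Set α := fun γ => X (min γ b) with hX'
  have hXa : X' a = X b := by simp [hX', min_eq_right hba]
  have key := hCuma U X' hU
    (fun γ _ => hX (min γ b) (min_le_right _ _))
    (by
      intro β _
      rcases le_or_gt β b with h | h
      · have := hμ β h
        simp only [hX', min_eq_left h]
        refine this.trans (Set.union_subset_union_right _ ?_)
        refine Set.iUnion₂_subset fun γ hγ => ?_
        have : min γ b = γ := min_eq_left (le_of_lt (lt_of_lt_of_le hγ h))
        exact Set.subset_iUnion₂_of_subset γ hγ (by rw [this])
      · have hmin : min β b = b := min_eq_right h.le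
        simp only [hX', hmin]
        refine (hμ b le_rfl).trans (Set.union_subset_union_right _ ?_)
        refine Set.iUnion₂_subset fun γ hγ => ?_
        have : min γ b = γ := min_eq_left hγ.le
        exact Set.subset_iUnion₂_of_subset γ (hγ.trans h) (by rw [this]))
  rw [hXa] at key
  refine fun x hx => key ?_
  refine ⟨Set.mem_iInter₂.2 fun γ _ => ?_, hx.2⟩
  exact Set.mem_iInter₂.1 hx.1 (min γ b) (min_le_right _ _)
end

section
/- For ordinals β ≤ α, if μ satisfies (μ⊆), (μPR) and (μCumtα), then μ satisfies (μCumtβ). -/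
/-- For ordinals b ≤ a, (μ⊆) + (μPR) + (μCumt a) imply (μCumt b). -/
theorem stmt_13 {α : Type*} (𝒴 : Set (Set α)) (μ : Set α → Set α)
    (a b : Ordinal) (hba : b ≤ a)
    (hSub : ∀ X ∈ 𝒴, μ X ⊆ X)
    (hPR : ∀ X ∈ 𝒴, ∀ Y ∈ 𝒴, X ⊆ Y → μ Y ∩ X ⊆ μ X)
    (hCumta : ∀ (U : Set α) (X : Ordinal → Set α), U ∈ 𝒴 → (∀ γ ≤ a, X γ ∈ 𝒴) →
      (∀ β ≤ a, μ (X β) ⊆ U ∪ ⋃ γ < β, X γ) →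
      X a ∩ μ U ⊆ μ (X a)) :
    ∀ (U : Set α) (X : Ordinal → Set α), U ∈ 𝒴 → (∀ γ ≤ b, X γ ∈ 𝒴) →
      (∀ β ≤ b, μ (X β) ⊆ U ∪ ⋃ γ < β, X γ) →
      X b ∩ μ U ⊆ μ (X b) := by
  intro U X hU hmem hcond
  set X' : Ordinal → Set α := fun γ => X (min γ b) with hX'
  have hXa : X' a = X b := by simp [hX', min_eq_right hba]
  have key : X' a ∩ μ U ⊆ μ (X' a) := by
    apply hCumta U X' hU
    · intro γ _
      exact hmem _ (min_le_right γ b)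
    · intro β _
      have h1 : μ (X' β) ⊆ U ∪ ⋃ γ < min β b, X γ := hcond _ (min_le_right β b)
      refine h1.trans (Set.union_subset_union_right U ?_)
      intro x hx
      simp only [Set.mem_iUnion] at hx ⊢
      obtain ⟨γ, hγ, hxγ⟩ := hx
      exact ⟨γ, lt_of_lt_of_le hγ (min_le_left β b),
        by show x ∈ X (γ ⊓ b); rwa [min_eq_left (le_of_lt (lt_of_lt_of_le hγ (min_le_right β b)))]⟩
  rwa [hXa] at key
end

section
/- If μ satisfies (μ⊆), (μPR) and (μCUM), and the domain is closed under finite unions, then μ(A) ⊆ B implies μ(A ∪ B) = μ(B). -/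
/-- (μ⊆) + (μPR) + (μCUM) + closure under finite unions: μ(A) ⊆ B implies μ(A ∪ B) = μ(B). -/
theorem stmt_14 {α : Type*} (𝒴 : Set (Set α)) (μ : Set α → Set α)
    (hUnion : ∀ X ∈ 𝒴, ∀ Y ∈ 𝒴, X ∪ Y ∈ 𝒴)
    (hSub : ∀ X ∈ 𝒴, μ X ⊆ X)
    (hPR : ∀ X ∈ 𝒴, ∀ Y ∈ 𝒴, X ⊆ Y → μ Y ∩ X ⊆ μ X)
    (hCUM : ∀ X ∈ 𝒴, ∀ Y ∈ 𝒴, μ X ⊆ Y → Y ⊆ X → μ X = μ Y) :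
    ∀ A ∈ 𝒴, ∀ B ∈ 𝒴, μ A ⊆ B → μ (A ∪ B) = μ B := by
  intro A hA B hB hAB
  have hAB𝒴 := hUnion A hA B hB
  have hsub : μ (A ∪ B) ⊆ B := by
    intro x hx
    rcases hSub _ hAB𝒴 hx with h | h
    · exact hAB (hPR A hA (A ∪ B) hAB𝒴 Set.subset_union_left ⟨hx, h⟩)
    · exact h
  exact hCUM (A ∪ B) hAB𝒴 B hB hsub Set.subset_union_right
end

section
/- If μ satisfies (μ⊆), (μPR) and (μCUM), and the domain is closed under finite unions, then μ(X) ⊆ U and U ⊆ Y imply μ(Y) ∩ X ⊆ μ(U). -/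
/-- (μ⊆) + (μPR) + (μCUM) + closure under finite unions:
    μ(X) ⊆ U and U ⊆ Y imply μ(Y) ∩ X ⊆ μ(U). -/
theorem stmt_15 {α : Type*} (𝒴 : Set (Set α)) (μ : Set α → Set α)
    (hUnion : ∀ X ∈ 𝒴, ∀ Y ∈ 𝒴, X ∪ Y ∈ 𝒴)
    (hSub : ∀ X ∈ 𝒴, μ X ⊆ X)
    (hPR : ∀ X ∈ 𝒴, ∀ Y ∈ 𝒴, X ⊆ Y → μ Y ∩ X ⊆ μ X)
    (hCUM : ∀ X ∈ 𝒴, ∀ Y ∈ 𝒴, μ X ⊆ Y → Y ⊆ X → μ X = μ Y) :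
    ∀ X ∈ 𝒴, ∀ U ∈ 𝒴, ∀ Y ∈ 𝒴, μ X ⊆ U → U ⊆ Y → μ Y ∩ X ⊆ μ U := by
  intro X hX U hU Y hY hXU hUY
  have hW : X ∪ Y ∈ 𝒴 := hUnion X hX Y hY
  have hZ : X ∪ U ∈ 𝒴 := hUnion X hX U hU
  -- μ(X∪Y) ⊆ Y
  have hWY : μ (X ∪ Y) ⊆ Y := by
    intro x hx
    rcases hSub _ hW hx with hx' | hx'
    · exact hUY (hXU (hPR X hX (X ∪ Y) hW Set.subset_union_left ⟨hx, hx'⟩))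
    · exact hx'
  have hWeq : μ (X ∪ Y) = μ Y := hCUM (X ∪ Y) hW Y hY hWY Set.subset_union_right
  -- μ(X∪U) ⊆ U
  have hZU : μ (X ∪ U) ⊆ U := by
    intro x hx
    rcases hSub _ hZ hx with hx' | hx'
    · exact hXU (hPR X hX (X ∪ U) hZ Set.subset_union_left ⟨hx, hx'⟩)
    · exact hx'
  have hZeq : μ (X ∪ U) = μ U := hCUM (X ∪ U) hZ U hU hZU Set.subset_union_right
  intro x ⟨hxY, hxX⟩
  have hxW : x ∈ μ (X ∪ Y) := hWeq ▸ hxY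
  have hZW : X ∪ U ⊆ X ∪ Y := Set.union_subset_union_right X hUY
  have : x ∈ μ (X ∪ U) := hPR (X ∪ U) hZ (X ∪ Y) hW hZW ⟨hxW, Or.inl hxX⟩
  exact hZeq ▸ this
end

section
/- If μ satisfies (μ⊆), (μPR) and (μCum0), then μ satisfies (μCUM): μ(X) ⊆ U ⊆ X implies μ(X) = μ(U). -/
/-- (μ⊆) + (μPR) + (μCum0) imply (μCUM). -/
theorem stmt_16 {α : Type*} (𝒴 : Set (Set α)) (μ : Set α → Set α)
    (hSub : ∀ X ∈ 𝒴, μ X ⊆ X)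
    (hPR : ∀ X ∈ 𝒴, ∀ Y ∈ 𝒴, X ⊆ Y → μ Y ∩ X ⊆ μ X)
    (hCum0 : ∀ X ∈ 𝒴, ∀ U ∈ 𝒴, μ X ⊆ U → X ∩ μ U ⊆ μ X) :
    ∀ X ∈ 𝒴, ∀ U ∈ 𝒴, μ X ⊆ U → U ⊆ X → μ X = μ U := by
  intro X hX U hU h1 h2
  apply Set.Subset.antisymm
  · intro x hx
    exact hPR U hU X hX h2 ⟨hx, h1 hx⟩
  · intro x hx
    exact hCum0 X hX U hU h1 ⟨h2 (hSub U hU hx), hx⟩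
end

section
/- If μ satisfies (μ⊆), (μPR) and (μCUM), and the domain is closed under finite unions, then μ satisfies (μCumtα) for every ordinal α: if μ(X_β) ⊆ U ∪ ⋃{X_γ : γ < β} for all β ≤ α, then X_α ∩ μ(U) ⊆ μ(X_α). -/
/-- (μ⊆) + (μPR) + (μCUM) + closure under finite unions imply (μCumtα) for every ordinal α. -/
theorem stmt_17 {α : Type*} (𝒴 : Set (Set α)) (μ : Set α → Set α)
    (hUnion : ∀ X ∈ 𝒴, ∀ Y ∈ 𝒴, X ∪ Y ∈ 𝒴)
    (hSub : ∀ X ∈ 𝒴, μ X ⊆ X)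
    (hPR : ∀ X ∈ 𝒴, ∀ Y ∈ 𝒴, X ⊆ Y → μ Y ∩ X ⊆ μ X)
    (hCUM : ∀ X ∈ 𝒴, ∀ Y ∈ 𝒴, μ X ⊆ Y → Y ⊆ X → μ X = μ Y) :
    ∀ (a : Ordinal) (U : Set α) (X : Ordinal → Set α), U ∈ 𝒴 → (∀ γ ≤ a, X γ ∈ 𝒴) →
      (∀ β ≤ a, μ (X β) ⊆ U ∪ ⋃ γ < β, X γ) →
      X a ∩ μ U ⊆ μ (X a) := by
  intro a U X hU hX hμX
  classical
  -- Y_T := U ∪ ⋃ γ ∈ T, X γ is in the domain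
  have hY : ∀ T : Finset Ordinal, (∀ γ ∈ T, γ ≤ a) → (U ∪ ⋃ γ ∈ (T : Finset Ordinal), X γ) ∈ 𝒴 := by
    intro T
    induction T using Finset.induction with
    | empty => intro _; simpa using hU
    | @insert b T hb ih =>
      intro h
      have h1 : U ∪ ⋃ γ ∈ insert b T, X γ = (U ∪ ⋃ γ ∈ T, X γ) ∪ X b := by
        rw [Finset.set_biUnion_insert, Set.union_comm (X b), ← Set.union_assoc]
      rw [h1]
      exact hUnion _ (ih fun γ hγ => h γ (Finset.mem_insert_of_mem hγ)) _
        (hX b (h b (Finset.mem_insert_self b _)))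
  -- key induction
  have key : ∀ β : Ordinal, β ≤ a → ∀ T : Finset Ordinal, (∀ γ ∈ T, γ < β) →
      μ (U ∪ ⋃ γ ∈ insert β T, X γ) = μ U := by
    intro β
    induction β using Ordinal.induction with
    | _ β IH =>
    intro hβa T hT
    -- elements of T are ≤ a
    have hTa : ∀ γ ∈ T, γ ≤ a := fun γ hγ => le_of_lt (lt_of_lt_of_le (hT γ hγ) hβa)
    -- step A : for R with all elements < β, μ (Y_R) = μ U
    have stepA : ∀ R : Finset Ordinal, (∀ γ ∈ R, γ < β) → μ (U ∪ ⋃ γ ∈ R, X γ) = μ U := by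
      intro R hR
      rcases R.eq_empty_or_nonempty with rfl | hne
      · simp
      · set m := R.max' hne with hm
        have hmR : m ∈ R := R.max'_mem hne
        have hmβ : m < β := hR m hmR
        have hRE : insert m (R.erase m) = R := Finset.insert_erase hmR
        have herase : ∀ γ ∈ R.erase m, γ < m := by
          intro γ hγ
          have h1 := Finset.mem_of_mem_erase hγ
          have h2 := Finset.ne_of_mem_erase hγ
          exact lt_of_le_of_ne (R.le_max' γ h1) h2
        have := IH m hmβ (le_of_lt (lt_of_lt_of_le hmβ hβa)) (R.erase m) herase
        rwa [hRE] at this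
    -- membership helpers
    have hmemZ : ∀ R : Finset Ordinal, (∀ γ ∈ R, γ < β) →
        (U ∪ ⋃ γ ∈ insert β R, X γ) ∈ 𝒴 := by
      intro R hR
      exact hY _ (by
        intro γ hγ
        rcases Finset.mem_insert.1 hγ with rfl | hγ'
        · exact hβa
        · exact le_of_lt (lt_of_lt_of_le (hR γ hγ') hβa))
    have hmemY : ∀ R : Finset Ordinal, (∀ γ ∈ R, γ < β) →
        (U ∪ ⋃ γ ∈ R, X γ) ∈ 𝒴 := by
      intro R hR
      exact hY _ (fun γ hγ => le_of_lt (lt_of_lt_of_le (hR γ hγ) hβa))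
    -- step B : μ(Y_{R∪{β}}) ⊆ U ∪ X β
    have stepB : ∀ R : Finset Ordinal, (∀ γ ∈ R, γ < β) →
        μ (U ∪ ⋃ γ ∈ insert β R, X γ) ⊆ U ∪ X β := by
      intro R hR x hx
      have hxZ : x ∈ U ∪ ⋃ γ ∈ insert β R, X γ := hSub _ (hmemZ R hR) hx
      by_cases hxβ : x ∈ X β
      · exact Or.inr hxβ
      · left
        have hxY : x ∈ U ∪ ⋃ γ ∈ R, X γ := by
          rcases hxZ with h | h
          · exact Or.inl h
          · right
            simp only [Set.mem_iUnion] at h ⊢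
            obtain ⟨γ, hγ, hxγ⟩ := h
            rcases Finset.mem_insert.1 hγ with rfl | hγ'
            · exact absurd hxγ hxβ
            · exact ⟨γ, hγ', hxγ⟩
        have hsub : (U ∪ ⋃ γ ∈ R, X γ) ⊆ U ∪ ⋃ γ ∈ insert β R, X γ := by
          apply Set.union_subset_union_right
          apply Set.biUnion_subset_biUnion_left
          intro γ hγ; exact Finset.mem_insert_of_mem hγ
        have hxμY := hPR _ (hmemY R hR) _ (hmemZ R hR) hsub ⟨hx, hxY⟩
        rw [stepA R hR] at hxμY
        exact hSub U hU hxμY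
    -- step C : enlarging R keeps μ(Z_R) fixed
    have stepC : ∀ R R' : Finset Ordinal, (∀ γ ∈ R, γ < β) → (∀ γ ∈ R', γ < β) → R ⊆ R' →
        μ (U ∪ ⋃ γ ∈ insert β R', X γ) = μ (U ∪ ⋃ γ ∈ insert β R, X γ) := by
      intro R R' hR hR' hRR'
      apply hCUM _ (hmemZ R' hR') _ (hmemZ R hR)
      · intro x hx
        rcases stepB R' hR' hx with h | h
        · exact Or.inl h
        · right
          simp only [Set.mem_iUnion]
          exact ⟨β, Finset.mem_insert_self β _, h⟩
      · apply Set.union_subset_union_right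
        apply Set.biUnion_subset_biUnion_left
        intro γ hγ
        rcases Finset.mem_insert.1 hγ with rfl | hγ'
        · exact Finset.mem_insert_self γ _
        · exact Finset.mem_insert_of_mem (hRR' hγ')
    -- main claim : μ(Z_T) ⊆ U
    have main : μ (U ∪ ⋃ γ ∈ insert β T, X γ) ⊆ U := by
      intro x hx
      by_contra hxU
      have hxβ : x ∈ X β := ((stepB T hT hx).resolve_left hxU)
      have hXβsub : X β ⊆ U ∪ ⋃ γ ∈ insert β T, X γ := by
        intro y hy; right
        simp only [Set.mem_iUnion]
        exact ⟨β, Finset.mem_insert_self β _, hy⟩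
      have hxμβ : x ∈ μ (X β) := hPR _ (hX β hβa) _ (hmemZ T hT) hXβsub ⟨hx, hxβ⟩
      have hxcup := hμX β hβa hxμβ
      rcases hxcup with h | h
      · exact hxU h
      · simp only [Set.mem_iUnion] at h
        obtain ⟨γ, hγβ, hxγ⟩ := h
        set T' : Finset Ordinal := insert γ T with hT'
        have hT'lt : ∀ δ ∈ T', δ < β := by
          intro δ hδ
          rcases Finset.mem_insert.1 hδ with rfl | hδ'
          · exact hγβ
          · exact hT δ hδ'
        have hxZ' : x ∈ μ (U ∪ ⋃ δ ∈ insert β T', X δ) := by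
          rw [stepC T T' hT hT'lt (Finset.subset_insert γ T)]
          exact hx
        have hsub : (U ∪ ⋃ δ ∈ T', X δ) ⊆ U ∪ ⋃ δ ∈ insert β T', X δ := by
          apply Set.union_subset_union_right
          apply Set.biUnion_subset_biUnion_left
          intro δ hδ; exact Finset.mem_insert_of_mem hδ
        have hxY' : x ∈ U ∪ ⋃ δ ∈ T', X δ := by
          right
          simp only [Set.mem_iUnion]
          exact ⟨γ, Finset.mem_insert_self γ _, hxγ⟩
        have hxμY' := hPR _ (hmemY T' hT'lt) _ (hmemZ T' hT'lt) hsub ⟨hxZ', hxY'⟩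
        rw [stepA T' hT'lt] at hxμY'
        exact hxU (hSub U hU hxμY')
    exact hCUM _ (hmemZ T hT) U hU main Set.subset_union_left
  -- conclude
  have hfin : μ (U ∪ X a) = μ U := by
    have := key a le_rfl ∅ (by simp)
    simpa using this
  intro x hx
  obtain ⟨hxa, hxμU⟩ := hx
  rw [← hfin] at hxμU
  exact hPR (X a) (hX a le_rfl) (U ∪ X a) (hUnion U hU (X a) (hX a le_rfl))
    Set.subset_union_right ⟨hxμU, hxa⟩
end

section
/- If μ satisfies (μ⊆), (μPR), (μCUM), and the domain is closed under finite intersections, then μ satisfies (μCum0): μ(X) ⊆ U implies X ∩ μ(U) ⊆ μ(X). -/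
/-- (μ⊆) + (μPR) + (μCUM) + closure under finite intersections imply (μCum0). -/
theorem stmt_18 {α : Type*} (𝒴 : Set (Set α)) (μ : Set α → Set α)
    (hInter : ∀ X ∈ 𝒴, ∀ Y ∈ 𝒴, X ∩ Y ∈ 𝒴)
    (hSub : ∀ X ∈ 𝒴, μ X ⊆ X)
    (hPR : ∀ X ∈ 𝒴, ∀ Y ∈ 𝒴, X ⊆ Y → μ Y ∩ X ⊆ μ X)
    (hCUM : ∀ X ∈ 𝒴, ∀ Y ∈ 𝒴, μ X ⊆ Y → Y ⊆ X → μ X = μ Y) :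
    ∀ X ∈ 𝒴, ∀ U ∈ 𝒴, μ X ⊆ U → X ∩ μ U ⊆ μ X := by
  intro X hX U hU hXU x hx
  have hXUmem : X ∩ U ∈ 𝒴 := hInter X hX U hU
  have heq : μ X = μ (X ∩ U) :=
    hCUM X hX (X ∩ U) hXUmem
      (fun y hy => ⟨hSub X hX hy, hXU hy⟩) Set.inter_subset_left
  have hxm : x ∈ μ (X ∩ U) :=
    hPR (X ∩ U) hXUmem U hU Set.inter_subset_right
      ⟨hx.2, hx.1, hSub U hU hx.2⟩
  rw [heq]; exact hxm
end
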